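/- Let Ω ⊆ ℝⁿ be an open bounded set, let p ≥ 2, and let σ : Ω × [0,∞) → ℝ be measurable and satisfy the upper bound in (H4) with constants σ̄, E₀ and the coercivity (H5) with constant c > 0. Let u₀, u₁, φ : ℝⁿ → ℝ be weakly differentiable with gradients (restricted to Ω) in L²(Ω) ∩ L^p(Ω), and let ε ∈ ℝ. Assume the two weak-formulation identities ∫_Ω σ(x,|∇u₁|) ∇u₁·(∇u₁ − ∇u₀ − ε∇φ) dx = 0 and ∫_Ω σ(x,|∇u₀|) ∇u₀·(∇u₁ − ∇u₀ − ε∇φ) dx = 0. Then c·‖∇u₁ − ∇u₀‖_{L^p(Ω)}^p ≤ |ε|·σ̄·[ ‖∇φ‖_{L²(Ω)}·(‖∇u₁‖_{L²(Ω)} + ‖∇u₀‖_{L²(Ω)}) + E₀^{2−p}·‖∇φ‖_{L^p(Ω)}·(‖∇u₁‖_{L^p(Ω)}^{p−1} + ‖∇u₀‖_{L^p(Ω)}^{p−1}) ]. (The key quantitative estimate in the proof of Lemma 3.1.) -/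

import Mathlib

open MeasureTheory Set
open scoped RealInnerProductSpace

open scoped ENNReal

lemma holder_aux {α : Type*} [MeasurableSpace α] {μ : Measure α} {p q : ℝ}
    (hpq : p.HolderConjugate q) {f g : α → ℝ}
    (hf0 : ∀ x, 0 ≤ f x) (hg0 : ∀ x, 0 ≤ g x)
    (hf : MemLp f (ENNReal.ofReal p) μ) (hg : MemLp g (ENNReal.ofReal q) μ) :
    Integrable (fun x => f x * g x) μ ∧
      ∫ x, f x * g x ∂μ ≤
        (eLpNorm f (ENNReal.ofReal p) μ).toReal * (eLpNorm g (ENNReal.ofReal q) μ).toReal := by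
  have hpne : ENNReal.ofReal p ≠ 0 := by
    simp [ENNReal.ofReal_eq_zero, not_le, hpq.pos]
  have hqne : ENNReal.ofReal q ≠ 0 := by
    simp [ENNReal.ofReal_eq_zero, not_le, hpq.symm.pos]
  have h1 : (1 : ℝ≥0∞) / 1 = 1 / ENNReal.ofReal p + 1 / ENNReal.ofReal q := by
    simp only [one_div]
    rw [hpq.inv_add_inv_ennreal, inv_one]
  constructor
  · exact memLp_one_iff_integrable.mp ((hg.smul hf (hpqr := hpq.ennrealOfReal) : MemLp (f • g) 1 μ))
  · have ef : (eLpNorm f (ENNReal.ofReal p) μ).toReal = (∫ x, f x ^ p ∂μ) ^ (1 / p) := by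
      rw [hf.eLpNorm_eq_integral_rpow_norm hpne ENNReal.ofReal_ne_top,
        ENNReal.toReal_ofReal (Real.rpow_nonneg (integral_nonneg fun x => by positivity) _),
        ENNReal.toReal_ofReal hpq.nonneg, one_div]
      congr 1
      exact integral_congr_ae (Filter.Eventually.of_forall fun x => by
        simp only []
        rw [Real.norm_of_nonneg (hf0 x)])
    have eg : (eLpNorm g (ENNReal.ofReal q) μ).toReal = (∫ x, g x ^ q ∂μ) ^ (1 / q) := by
      rw [hg.eLpNorm_eq_integral_rpow_norm hqne ENNReal.ofReal_ne_top,
        ENNReal.toReal_ofReal (Real.rpow_nonneg (integral_nonneg fun x => by positivity) _),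
        ENNReal.toReal_ofReal hpq.symm.nonneg, one_div]
      congr 1
      exact integral_congr_ae (Filter.Eventually.of_forall fun x => by
        simp only []
        rw [Real.norm_of_nonneg (hg0 x)])
    rw [ef, eg]
    exact integral_mul_le_Lp_mul_Lq_of_nonneg hpq
      (Filter.Eventually.of_forall hf0) (Filter.Eventually.of_forall hg0) hf hg

lemma memLp_norm_rpow_aux {α : Type*} [MeasurableSpace α] {μ : Measure α}
    {H : Type*} [NormedAddCommGroup H] {p : ℝ} (hp : 1 < p) {f : α → H}
    (hf : MemLp f (ENNReal.ofReal p) μ) :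
    MemLp (fun x => ‖f x‖ ^ (p - 1)) (ENNReal.ofReal (p / (p - 1))) μ ∧
      (eLpNorm (fun x => ‖f x‖ ^ (p - 1)) (ENNReal.ofReal (p / (p - 1))) μ).toReal
        = (eLpNorm f (ENNReal.ofReal p) μ).toReal ^ (p - 1) := by
  have key : eLpNorm (fun x => ‖f x‖ ^ (p - 1)) (ENNReal.ofReal (p / (p - 1))) μ
      = eLpNorm f (ENNReal.ofReal p) μ ^ (p - 1) := by
    rw [eLpNorm_norm_rpow f (by linarith : (0:ℝ) < p - 1)]
    congr 1
    rw [← ENNReal.ofReal_mul (div_nonneg (by linarith) (by linarith)),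
      div_mul_cancel₀ _ (by linarith : p - 1 ≠ 0)]
  refine ⟨⟨((Real.continuous_rpow_const (by linarith)).measurable.comp_aemeasurable
      hf.1.norm.aemeasurable).aestronglyMeasurable, ?_⟩, ?_⟩
  · rw [key]
    exact ENNReal.rpow_lt_top_of_nonneg (by linarith) hf.eLpNorm_ne_top
  · rw [key, ← ENNReal.toReal_rpow]

open scoped RealInnerProductSpace

lemma T_estimate {n : ℕ} {μ : Measure (EuclideanSpace ℝ (Fin n))}
    {p : ℝ} (hp : 2 ≤ p)
    {σ : EuclideanSpace ℝ (Fin n) → ℝ → ℝ} (hσmeas : Measurable (Function.uncurry σ))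
    {σu E₀ : ℝ} (hσu : 0 < σu) (hE₀ : 0 < E₀)
    (hupper : ∀ᵐ x ∂μ, ∀ E > (0:ℝ), σ x E ≤ σu * max 1 ((E / E₀) ^ (p - 2)))
    {c : ℝ} (hc : 0 < c)
    (hcoer : ∀ᵐ x ∂μ, ∀ a b : EuclideanSpace ℝ (Fin n),
      c * ‖b - a‖ ^ p ≤ ⟪σ x ‖b‖ • b - σ x ‖a‖ • a, b - a⟫)
    {f v : EuclideanSpace ℝ (Fin n) → EuclideanSpace ℝ (Fin n)}
    (hf2 : MemLp f 2 μ) (hfp : MemLp f (ENNReal.ofReal p) μ)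
    (hv2 : MemLp v 2 μ) (hvp : MemLp v (ENNReal.ofReal p) μ) :
    Integrable (fun x => σ x ‖f x‖ * ⟪f x, v x⟫) μ ∧
      |∫ x, σ x ‖f x‖ * ⟪f x, v x⟫ ∂μ| ≤
        σu * ((eLpNorm f 2 μ).toReal * (eLpNorm v 2 μ).toReal
          + E₀ ^ (2 - p) * ((eLpNorm f (ENNReal.ofReal p) μ).toReal ^ (p - 1)
              * (eLpNorm v (ENNReal.ofReal p) μ).toReal)) := by
  have h2e : (ENNReal.ofReal 2) = (2 : ℝ≥0∞) := by norm_num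
  have hconj2 : (2:ℝ).HolderConjugate 2 := Real.HolderConjugate.two_two
  have hconjp : (p/(p-1)).HolderConjugate p := by
    have := (Real.HolderConjugate.conjExponent (show 1 < p by linarith)).symm
    simpa [Real.conjExponent] using this
  have hf2' : MemLp (fun x => ‖f x‖) (ENNReal.ofReal 2) μ := by rw [h2e]; exact hf2.norm
  have hv2' : MemLp (fun x => ‖v x‖) (ENNReal.ofReal 2) μ := by rw [h2e]; exact hv2.norm
  obtain ⟨int1, le1⟩ := holder_aux hconj2 (fun x => norm_nonneg (f x))
    (fun x => norm_nonneg (v x)) hf2' hv2'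
  obtain ⟨hBmem, hBnorm⟩ := memLp_norm_rpow_aux (show 1 < p by linarith) hfp
  obtain ⟨int2, le2⟩ := holder_aux hconjp
    (fun x => Real.rpow_nonneg (norm_nonneg (f x)) _) (fun x => norm_nonneg (v x))
    hBmem hvp.norm
  have le1' : ∫ x, ‖f x‖ * ‖v x‖ ∂μ ≤ (eLpNorm f 2 μ).toReal * (eLpNorm v 2 μ).toReal := by
    rwa [show eLpNorm (fun x => ‖f x‖) (ENNReal.ofReal 2) μ = eLpNorm f 2 μ by
        rw [h2e, eLpNorm_norm],
      show eLpNorm (fun x => ‖v x‖) (ENNReal.ofReal 2) μ = eLpNorm v 2 μ by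
        rw [h2e, eLpNorm_norm]] at le1
  have le2' : ∫ x, ‖f x‖ ^ (p-1) * ‖v x‖ ∂μ ≤
      (eLpNorm f (ENNReal.ofReal p) μ).toReal ^ (p-1) *
        (eLpNorm v (ENNReal.ofReal p) μ).toReal := by
    rwa [hBnorm, eLpNorm_norm] at le2
  have bound : ∀ᵐ x ∂μ, |σ x ‖f x‖ * ⟪f x, v x⟫| ≤
      σu * (‖f x‖ * ‖v x‖ + E₀ ^ (2-p) * (‖f x‖ ^ (p-1) * ‖v x‖)) := by
    filter_upwards [hupper, hcoer] with x hx hcx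
    by_cases ha : f x = 0
    · simp [ha, Real.zero_rpow (show p - 1 ≠ 0 by linarith)]
    · have hna : 0 < ‖f x‖ := norm_pos_iff.mpr ha
      have h0 := hcx 0 (f x)
      simp only [norm_zero, sub_zero, smul_zero, real_inner_smul_left,
        real_inner_self_eq_norm_mul_norm] at h0
      have hσ0 : 0 ≤ σ x ‖f x‖ := by
        by_contra hneg
        push_neg at hneg
        have h1 : σ x ‖f x‖ * (‖f x‖ * ‖f x‖) < 0 :=
          mul_neg_of_neg_of_pos hneg (by positivity)
        have h2 : 0 < c * ‖f x‖ ^ p := mul_pos hc (Real.rpow_pos_of_pos hna p)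
        linarith
      have hσle := hx ‖f x‖ hna
      calc |σ x ‖f x‖ * ⟪f x, v x⟫| = σ x ‖f x‖ * |⟪f x, v x⟫| := by
            rw [abs_mul, abs_of_nonneg hσ0]
        _ ≤ σ x ‖f x‖ * (‖f x‖ * ‖v x‖) :=
            mul_le_mul_of_nonneg_left (abs_real_inner_le_norm _ _) hσ0
        _ ≤ (σu * max 1 ((‖f x‖/E₀) ^ (p-2))) * (‖f x‖ * ‖v x‖) :=
            mul_le_mul_of_nonneg_right hσle (by positivity)
        _ ≤ σu * (1 + (‖f x‖/E₀) ^ (p-2)) * (‖f x‖ * ‖v x‖) := by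
            have ht : 0 ≤ (‖f x‖/E₀) ^ (p-2) :=
              Real.rpow_nonneg (div_nonneg (norm_nonneg (f x)) hE₀.le) _
            apply mul_le_mul_of_nonneg_right _ (by positivity)
            apply mul_le_mul_of_nonneg_left _ hσu.le
            exact max_le (by linarith) (by linarith)
        _ = σu * (‖f x‖ * ‖v x‖ + E₀ ^ (2-p) * (‖f x‖ ^ (p-1) * ‖v x‖)) := by
            have hdiv : (‖f x‖/E₀) ^ (p-2) = E₀ ^ (2-p) * ‖f x‖ ^ (p-2) := by
              rw [Real.div_rpow (norm_nonneg _) hE₀.le, div_eq_mul_inv, mul_comm,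
                ← Real.rpow_neg hE₀.le, neg_sub]
            have hpow : ‖f x‖ ^ (p-2) * ‖f x‖ = ‖f x‖ ^ (p-1) := by
              rw [show p - 1 = (p-2) + 1 by ring, Real.rpow_add hna, Real.rpow_one]
            rw [hdiv, ← hpow]; ring
  have hBint : Integrable
      (fun x => σu * (‖f x‖ * ‖v x‖ + E₀ ^ (2-p) * (‖f x‖ ^ (p-1) * ‖v x‖))) μ :=
    (int1.add (int2.const_mul _)).const_mul σu
  have hTmeas : AEStronglyMeasurable (fun x => σ x ‖f x‖ * ⟪f x, v x⟫) μ := by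
    apply AEMeasurable.aestronglyMeasurable
    exact (hσmeas.comp_aemeasurable
        (aemeasurable_id.prodMk hf2.1.norm.aemeasurable)).mul
      (hf2.1.inner hv2.1).aemeasurable
  have hTint : Integrable (fun x => σ x ‖f x‖ * ⟪f x, v x⟫) μ := by
    refine hBint.mono' hTmeas ?_
    filter_upwards [bound] with x hx
    rw [Real.norm_eq_abs]; exact hx
  refine ⟨hTint, ?_⟩
  calc |∫ x, σ x ‖f x‖ * ⟪f x, v x⟫ ∂μ| ≤ ∫ x, |σ x ‖f x‖ * ⟪f x, v x⟫| ∂μ := by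
        have := norm_integral_le_integral_norm (μ := μ)
          (fun x => σ x ‖f x‖ * ⟪f x, v x⟫)
        simpa only [Real.norm_eq_abs] using this
    _ ≤ ∫ x, σu * (‖f x‖ * ‖v x‖ + E₀ ^ (2-p) * (‖f x‖ ^ (p-1) * ‖v x‖)) ∂μ :=
        integral_mono_ae hTint.abs hBint bound
    _ = σu * ((∫ x, ‖f x‖ * ‖v x‖ ∂μ) +
          E₀ ^ (2-p) * ∫ x, ‖f x‖ ^ (p-1) * ‖v x‖ ∂μ) := by
        rw [integral_const_mul, integral_add int1 (int2.const_mul _), integral_const_mul]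
    _ ≤ _ := by
        apply mul_le_mul_of_nonneg_left _ hσu.le
        exact add_le_add le1' (mul_le_mul_of_nonneg_left le2' (Real.rpow_nonneg hE₀.le _))

/-- **Key quantitative estimate in the proof of Lemma 3.1**: if `u₁` and `u₀` are weak
solutions tested against `u₁ − u₀ − εφ`, then
`c·‖∇u₁ − ∇u₀‖_p^p ≤ |ε|·σ̄·[‖∇φ‖₂(‖∇u₁‖₂+‖∇u₀‖₂) + E₀^{2−p}‖∇φ‖_p(‖∇u₁‖_p^{p−1}+‖∇u₀‖_p^{p−1})]`. -/
theorem key_quantitative_estimate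
    {n : ℕ} (Ω : Set (EuclideanSpace ℝ (Fin n)))
    (hΩo : IsOpen Ω) (hΩb : Bornology.IsBounded Ω)
    (p : ℝ) (hp : 2 ≤ p)
    (σ : EuclideanSpace ℝ (Fin n) → ℝ → ℝ)
    (hσmeas : Measurable (Function.uncurry σ))
    -- upper bound in (H4)
    (σu E₀ : ℝ) (hσu : 0 < σu) (hE₀ : 0 < E₀)
    (hupper : ∀ᵐ x ∂(volume.restrict Ω), ∀ E > (0:ℝ),
      σ x E ≤ σu * max 1 ((E / E₀) ^ (p - 2)))
    -- coercivity (H5)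
    (c : ℝ) (hc : 0 < c)
    (hcoer : ∀ᵐ x ∂(volume.restrict Ω), ∀ a b : EuclideanSpace ℝ (Fin n),
      c * ‖b - a‖ ^ p ≤ ⟪σ x ‖b‖ • b - σ x ‖a‖ • a, b - a⟫)
    -- u₀, u₁, φ weakly differentiable, gradients in L²(Ω) ∩ L^p(Ω)
    (u₀ u₁ φ : EuclideanSpace ℝ (Fin n) → ℝ)
    (hu₀ : Differentiable ℝ u₀) (hu₁ : Differentiable ℝ u₁) (hφ : Differentiable ℝ φ)
    (hu₀L2 : MemLp (fun x => gradient u₀ x) 2 (volume.restrict Ω))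
    (hu₀Lp : MemLp (fun x => gradient u₀ x) (ENNReal.ofReal p) (volume.restrict Ω))
    (hu₁L2 : MemLp (fun x => gradient u₁ x) 2 (volume.restrict Ω))
    (hu₁Lp : MemLp (fun x => gradient u₁ x) (ENNReal.ofReal p) (volume.restrict Ω))
    (hφL2 : MemLp (fun x => gradient φ x) 2 (volume.restrict Ω))
    (hφLp : MemLp (fun x => gradient φ x) (ENNReal.ofReal p) (volume.restrict Ω))
    (ε : ℝ)
    -- the two weak-formulation identities
    (hweak₁ : ∫ x in Ω, σ x ‖gradient u₁ x‖ *
        ⟪gradient u₁ x, gradient u₁ x - gradient u₀ x - ε • gradient φ x⟫ = 0)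
    (hweak₀ : ∫ x in Ω, σ x ‖gradient u₀ x‖ *
        ⟪gradient u₀ x, gradient u₁ x - gradient u₀ x - ε • gradient φ x⟫ = 0) :
    c * (eLpNorm (fun x => gradient u₁ x - gradient u₀ x)
          (ENNReal.ofReal p) (volume.restrict Ω)).toReal ^ p
      ≤ |ε| * σu *
        ((eLpNorm (fun x => gradient φ x) 2 (volume.restrict Ω)).toReal *
            ((eLpNorm (fun x => gradient u₁ x) 2 (volume.restrict Ω)).toReal +
              (eLpNorm (fun x => gradient u₀ x) 2 (volume.restrict Ω)).toReal) +
          E₀ ^ (2 - p) *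
            (eLpNorm (fun x => gradient φ x) (ENNReal.ofReal p) (volume.restrict Ω)).toReal *
            ((eLpNorm (fun x => gradient u₁ x) (ENNReal.ofReal p)
                (volume.restrict Ω)).toReal ^ (p - 1) +
              (eLpNorm (fun x => gradient u₀ x) (ENNReal.ofReal p)
                (volume.restrict Ω)).toReal ^ (p - 1))) := by
  set μ := volume.restrict Ω with hμ
  obtain ⟨i11, b11⟩ := T_estimate hp hσmeas hσu hE₀ hupper hc hcoer hu₁L2 hu₁Lp hu₁L2 hu₁Lp
  obtain ⟨i10, b10⟩ := T_estimate hp hσmeas hσu hE₀ hupper hc hcoer hu₁L2 hu₁Lp hu₀L2 hu₀Lp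
  obtain ⟨i1φ, b1φ⟩ := T_estimate hp hσmeas hσu hE₀ hupper hc hcoer hu₁L2 hu₁Lp hφL2 hφLp
  obtain ⟨i01, b01⟩ := T_estimate hp hσmeas hσu hE₀ hupper hc hcoer hu₀L2 hu₀Lp hu₁L2 hu₁Lp
  obtain ⟨i00, b00⟩ := T_estimate hp hσmeas hσu hE₀ hupper hc hcoer hu₀L2 hu₀Lp hu₀L2 hu₀Lp
  obtain ⟨i0φ, b0φ⟩ := T_estimate hp hσmeas hσu hE₀ hupper hc hcoer hu₀L2 hu₀Lp hφL2 hφLp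
  have e1 : (∫ x, σ x ‖gradient u₁ x‖ *
        ⟪gradient u₁ x, gradient u₁ x - gradient u₀ x - ε • gradient φ x⟫ ∂μ)
      = ((∫ x, σ x ‖gradient u₁ x‖ * ⟪gradient u₁ x, gradient u₁ x⟫ ∂μ)
          - ∫ x, σ x ‖gradient u₁ x‖ * ⟪gradient u₁ x, gradient u₀ x⟫ ∂μ)
        - ε * ∫ x, σ x ‖gradient u₁ x‖ * ⟪gradient u₁ x, gradient φ x⟫ ∂μ := by
    rw [show (fun x => σ x ‖gradient u₁ x‖ *
        ⟪gradient u₁ x, gradient u₁ x - gradient u₀ x - ε • gradient φ x⟫)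
        = fun x => (σ x ‖gradient u₁ x‖ * ⟪gradient u₁ x, gradient u₁ x⟫
            - σ x ‖gradient u₁ x‖ * ⟪gradient u₁ x, gradient u₀ x⟫)
          - ε * (σ x ‖gradient u₁ x‖ * ⟪gradient u₁ x, gradient φ x⟫) from
      funext fun x => by
        rw [inner_sub_right, inner_sub_right, real_inner_smul_right]; ring]
    have iA1 : Integrable (fun x => σ x ‖gradient u₁ x‖ * ⟪gradient u₁ x, gradient u₁ x⟫
        - σ x ‖gradient u₁ x‖ * ⟪gradient u₁ x, gradient u₀ x⟫) μ := i11.sub i10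
    rw [integral_sub iA1 (i1φ.const_mul ε), integral_sub i11 i10,
      integral_const_mul]
  have e0 : (∫ x, σ x ‖gradient u₀ x‖ *
        ⟪gradient u₀ x, gradient u₁ x - gradient u₀ x - ε • gradient φ x⟫ ∂μ)
      = ((∫ x, σ x ‖gradient u₀ x‖ * ⟪gradient u₀ x, gradient u₁ x⟫ ∂μ)
          - ∫ x, σ x ‖gradient u₀ x‖ * ⟪gradient u₀ x, gradient u₀ x⟫ ∂μ)
        - ε * ∫ x, σ x ‖gradient u₀ x‖ * ⟪gradient u₀ x, gradient φ x⟫ ∂μ := by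
    rw [show (fun x => σ x ‖gradient u₀ x‖ *
        ⟪gradient u₀ x, gradient u₁ x - gradient u₀ x - ε • gradient φ x⟫)
        = fun x => (σ x ‖gradient u₀ x‖ * ⟪gradient u₀ x, gradient u₁ x⟫
            - σ x ‖gradient u₀ x‖ * ⟪gradient u₀ x, gradient u₀ x⟫)
          - ε * (σ x ‖gradient u₀ x‖ * ⟪gradient u₀ x, gradient φ x⟫) from
      funext fun x => by
        rw [inner_sub_right, inner_sub_right, real_inner_smul_right]; ring]
    have iA0 : Integrable (fun x => σ x ‖gradient u₀ x‖ * ⟪gradient u₀ x, gradient u₁ x⟫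
        - σ x ‖gradient u₀ x‖ * ⟪gradient u₀ x, gradient u₀ x⟫) μ := i01.sub i00
    rw [integral_sub iA0 (i0φ.const_mul ε), integral_sub i01 i00,
      integral_const_mul]
  rw [e1] at hweak₁
  rw [e0] at hweak₀
  have hpne : (ENNReal.ofReal p) ≠ 0 := by
    simp [ENNReal.ofReal_eq_zero, not_le]; linarith
  have hdiffLp : MemLp (fun x => gradient u₁ x - gradient u₀ x) (ENNReal.ofReal p) μ :=
    hu₁Lp.sub hu₀Lp
  have hIdiff : Integrable (fun x => ‖gradient u₁ x - gradient u₀ x‖ ^ p) μ := by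
    have := hdiffLp.integrable_norm_rpow hpne ENNReal.ofReal_ne_top
    simpa [ENNReal.toReal_ofReal (by linarith : (0:ℝ) ≤ p)] using this
  have stepA : c * ∫ x, ‖gradient u₁ x - gradient u₀ x‖ ^ p ∂μ ≤
      (((∫ x, σ x ‖gradient u₁ x‖ * ⟪gradient u₁ x, gradient u₁ x⟫ ∂μ)
        - ∫ x, σ x ‖gradient u₁ x‖ * ⟪gradient u₁ x, gradient u₀ x⟫ ∂μ)
        - ∫ x, σ x ‖gradient u₀ x‖ * ⟪gradient u₀ x, gradient u₁ x⟫ ∂μ)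
        + ∫ x, σ x ‖gradient u₀ x‖ * ⟪gradient u₀ x, gradient u₀ x⟫ ∂μ := by
    have hae : ∀ᵐ x ∂μ, c * ‖gradient u₁ x - gradient u₀ x‖ ^ p ≤
        ((σ x ‖gradient u₁ x‖ * ⟪gradient u₁ x, gradient u₁ x⟫
          - σ x ‖gradient u₁ x‖ * ⟪gradient u₁ x, gradient u₀ x⟫)
          - σ x ‖gradient u₀ x‖ * ⟪gradient u₀ x, gradient u₁ x⟫)
          + σ x ‖gradient u₀ x‖ * ⟪gradient u₀ x, gradient u₀ x⟫ := by
      filter_upwards [hcoer] with x hcx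
      have h := hcx (gradient u₀ x) (gradient u₁ x)
      simp only [inner_sub_left, inner_sub_right, real_inner_smul_left] at h
      linarith
    have iS1 : Integrable (fun x => σ x ‖gradient u₁ x‖ * ⟪gradient u₁ x, gradient u₁ x⟫
        - σ x ‖gradient u₁ x‖ * ⟪gradient u₁ x, gradient u₀ x⟫) μ := i11.sub i10
    have iS2 : Integrable (fun x => (σ x ‖gradient u₁ x‖ * ⟪gradient u₁ x, gradient u₁ x⟫
        - σ x ‖gradient u₁ x‖ * ⟪gradient u₁ x, gradient u₀ x⟫)
        - σ x ‖gradient u₀ x‖ * ⟪gradient u₀ x, gradient u₁ x⟫) μ := iS1.sub i01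
    have hsplit : ∫ x, ((σ x ‖gradient u₁ x‖ * ⟪gradient u₁ x, gradient u₁ x⟫
          - σ x ‖gradient u₁ x‖ * ⟪gradient u₁ x, gradient u₀ x⟫)
          - σ x ‖gradient u₀ x‖ * ⟪gradient u₀ x, gradient u₁ x⟫)
          + σ x ‖gradient u₀ x‖ * ⟪gradient u₀ x, gradient u₀ x⟫ ∂μ
        = (((∫ x, σ x ‖gradient u₁ x‖ * ⟪gradient u₁ x, gradient u₁ x⟫ ∂μ)
          - ∫ x, σ x ‖gradient u₁ x‖ * ⟪gradient u₁ x, gradient u₀ x⟫ ∂μ)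
          - ∫ x, σ x ‖gradient u₀ x‖ * ⟪gradient u₀ x, gradient u₁ x⟫ ∂μ)
          + ∫ x, σ x ‖gradient u₀ x‖ * ⟪gradient u₀ x, gradient u₀ x⟫ ∂μ := by
      rw [integral_add iS2 i00, integral_sub iS1 i01, integral_sub i11 i10]
    have hmul : ∫ x, c * ‖gradient u₁ x - gradient u₀ x‖ ^ p ∂μ
        = c * ∫ x, ‖gradient u₁ x - gradient u₀ x‖ ^ p ∂μ := integral_const_mul c _
    have h' : (∫ x, c * ‖gradient u₁ x - gradient u₀ x‖ ^ p ∂μ) ≤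
        ∫ x, ((σ x ‖gradient u₁ x‖ * ⟪gradient u₁ x, gradient u₁ x⟫
          - σ x ‖gradient u₁ x‖ * ⟪gradient u₁ x, gradient u₀ x⟫)
          - σ x ‖gradient u₀ x‖ * ⟪gradient u₀ x, gradient u₁ x⟫)
          + σ x ‖gradient u₀ x‖ * ⟪gradient u₀ x, gradient u₀ x⟫ ∂μ :=
      integral_mono_ae (hIdiff.const_mul c) (iS2.add i00) hae
    rw [hsplit, hmul] at h'
    exact h'
  have hnorm_eq : ((eLpNorm (fun x => gradient u₁ x - gradient u₀ x)
      (ENNReal.ofReal p) μ).toReal) ^ p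
      = ∫ x, ‖gradient u₁ x - gradient u₀ x‖ ^ p ∂μ := by
    have hp0 : (0:ℝ) ≤ p := by linarith
    have hInn : 0 ≤ ∫ x, ‖gradient u₁ x - gradient u₀ x‖ ^ (ENNReal.ofReal p).toReal ∂μ :=
      integral_nonneg fun x => Real.rpow_nonneg (norm_nonneg _) _
    have hInn' : 0 ≤ ∫ x, ‖gradient u₁ x - gradient u₀ x‖ ^ p ∂μ := by
      simpa [ENNReal.toReal_ofReal hp0] using hInn
    have hpne' : p ≠ 0 := by positivity
    rw [hdiffLp.eLpNorm_eq_integral_rpow_norm hpne ENNReal.ofReal_ne_top,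
      ENNReal.toReal_ofReal (Real.rpow_nonneg hInn _)]
    simp only [ENNReal.toReal_ofReal hp0]
    rw [← Real.rpow_mul hInn', inv_mul_cancel₀ hpne', Real.rpow_one]
  have habs : ε * (∫ x, σ x ‖gradient u₁ x‖ * ⟪gradient u₁ x, gradient φ x⟫ ∂μ)
        - ε * (∫ x, σ x ‖gradient u₀ x‖ * ⟪gradient u₀ x, gradient φ x⟫ ∂μ)
      ≤ |ε| * |∫ x, σ x ‖gradient u₁ x‖ * ⟪gradient u₁ x, gradient φ x⟫ ∂μ|
        + |ε| * |∫ x, σ x ‖gradient u₀ x‖ * ⟪gradient u₀ x, gradient φ x⟫ ∂μ| := by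
    set A := ∫ x, σ x ‖gradient u₁ x‖ * ⟪gradient u₁ x, gradient φ x⟫ ∂μ
    set B := ∫ x, σ x ‖gradient u₀ x‖ * ⟪gradient u₀ x, gradient φ x⟫ ∂μ
    calc ε * A - ε * B = ε * (A - B) := by ring
      _ ≤ |ε * (A - B)| := le_abs_self _
      _ = |ε| * |A - B| := abs_mul _ _
      _ ≤ |ε| * (|A| + |B|) := by
          have h1 : |A - B| ≤ |A| + |B| := by
            have := abs_add_le A (-B)
            simpa [sub_eq_add_neg] using this
          exact mul_le_mul_of_nonneg_left h1 (abs_nonneg ε)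
      _ = |ε| * |A| + |ε| * |B| := by ring
  calc c * (eLpNorm (fun x => gradient u₁ x - gradient u₀ x)
        (ENNReal.ofReal p) μ).toReal ^ p
      = c * ∫ x, ‖gradient u₁ x - gradient u₀ x‖ ^ p ∂μ := by rw [hnorm_eq]
    _ ≤ _ := stepA
    _ = ε * (∫ x, σ x ‖gradient u₁ x‖ * ⟪gradient u₁ x, gradient φ x⟫ ∂μ)
        - ε * (∫ x, σ x ‖gradient u₀ x‖ * ⟪gradient u₀ x, gradient φ x⟫ ∂μ) := by
        linarith
    _ ≤ |ε| * |∫ x, σ x ‖gradient u₁ x‖ * ⟪gradient u₁ x, gradient φ x⟫ ∂μ|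
        + |ε| * |∫ x, σ x ‖gradient u₀ x‖ * ⟪gradient u₀ x, gradient φ x⟫ ∂μ| := habs
    _ ≤ |ε| * (σu * ((eLpNorm (fun x => gradient u₁ x) 2 μ).toReal *
            (eLpNorm (fun x => gradient φ x) 2 μ).toReal
          + E₀ ^ (2 - p) * ((eLpNorm (fun x => gradient u₁ x)
              (ENNReal.ofReal p) μ).toReal ^ (p - 1) *
            (eLpNorm (fun x => gradient φ x) (ENNReal.ofReal p) μ).toReal)))
        + |ε| * (σu * ((eLpNorm (fun x => gradient u₀ x) 2 μ).toReal *
            (eLpNorm (fun x => gradient φ x) 2 μ).toReal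
          + E₀ ^ (2 - p) * ((eLpNorm (fun x => gradient u₀ x)
              (ENNReal.ofReal p) μ).toReal ^ (p - 1) *
            (eLpNorm (fun x => gradient φ x) (ENNReal.ofReal p) μ).toReal))) :=
        add_le_add (mul_le_mul_of_nonneg_left b1φ (abs_nonneg ε))
          (mul_le_mul_of_nonneg_left b0φ (abs_nonneg ε))
    _ = _ := by ring
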